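/- Let H1, H2 be real separable Hilbert spaces, u ∈ H1 and v ∈ H2 unit vectors. Define T ⊆ B2(H1;H2) (the Hilbert–Schmidt operators) as T = { u ⊗ b + a ⊗ v : a ∈ H1, b ∈ H2 }. Then for every Hilbert–Schmidt operator H, the orthogonal projection of H onto T is P_T(H) = u ⊗ (Hu) + (H*v) ⊗ v − ⟨H, u ⊗ v⟩_{HS} (u ⊗ v), and the orthogonal projection onto the orthogonal complement of T is P_{T⊥}(H) = P_{v⊥} ∘ H ∘ P_{u⊥}, where P_{u⊥}, P_{v⊥} are the orthogonal projections onto the orthogonal complements of span{u} and span{v}. -/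

import Mathlib

open scoped RealInnerProductSpace

/-- The rank-one operator `u ⊗ v : a ↦ ⟪u, a⟫ • v`. -/
noncomputable def rankOne {H1 H2 : Type*} [NormedAddCommGroup H1] [InnerProductSpace ℝ H1]
    [NormedAddCommGroup H2] [InnerProductSpace ℝ H2] (u : H1) (v : H2) : H1 →L[ℝ] H2 :=
  (innerSL ℝ u).smulRight v

/-- The Hilbert–Schmidt inner product `⟨A, B⟩ = Σ_i ⟪A e_i, B e_i⟫` with respect to an
orthonormal basis `b` of the source space. -/
noncomputable def hsInner {H1 H2 ι : Type*} [NormedAddCommGroup H1] [InnerProductSpace ℝ H1]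
    [NormedAddCommGroup H2] [InnerProductSpace ℝ H2]
    (b : HilbertBasis ι ℝ H1) (A B : H1 →L[ℝ] H2) : ℝ :=
  ∑' i, ⟪A (b i), B (b i)⟫

/-- The orthogonal projection onto the orthogonal complement of `span {u}`, for `‖u‖ = 1`:
`x ↦ x - ⟪u, x⟫ • u`. -/
noncomputable def perpProj {E : Type*} [NormedAddCommGroup E] [InnerProductSpace ℝ E]
    (u : E) : E →L[ℝ] E :=
  ContinuousLinearMap.id ℝ E - rankOne u u

theorem stmt4 {H1 H2 ι : Type*}
    [NormedAddCommGroup H1] [InnerProductSpace ℝ H1] [CompleteSpace H1]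
    [TopologicalSpace.SeparableSpace H1]
    [NormedAddCommGroup H2] [InnerProductSpace ℝ H2] [CompleteSpace H2]
    [TopologicalSpace.SeparableSpace H2]
    (u : H1) (v : H2) (hu : ‖u‖ = 1) (hv : ‖v‖ = 1)
    -- `H` is a Hilbert–Schmidt operator:
    (H : H1 →L[ℝ] H2) (b : HilbertBasis ι ℝ H1)
    (hHS : Summable fun i => ‖H (b i)‖ ^ 2)
    (P : H1 →L[ℝ] H2)
    (hP : P = rankOne u (H u) + rankOne (ContinuousLinearMap.adjoint H v) v
            - ⟪H u, v⟫ • rankOne u v) :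
    -- `P` is the orthogonal projection of `H` onto `T`: it belongs to `T` and `H - P ⊥ T`,
    (∃ (a : H1) (c : H2), P = rankOne u c + rankOne a v) ∧
    (∀ (a : H1) (c : H2), hsInner b (H - P) (rankOne u c + rankOne a v) = 0) ∧
    -- and the projection of `H` onto `T^⊥` is `P_{v^⊥} ∘ H ∘ P_{u^⊥}`:
    H - P = (perpProj v).comp (H.comp (perpProj u)) := by
  have huu : ⟪u, u⟫ = 1 := by
    rw [real_inner_self_eq_norm_sq, hu]; norm_num
  have hvv : ⟪v, v⟫ = 1 := by
    rw [real_inner_self_eq_norm_sq, hv]; norm_num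
  set Q : H1 →L[ℝ] H2 := (perpProj v).comp (H.comp (perpProj u)) with hQdef
  have hQ : H - P = Q := by
    ext x
    simp only [hP, hQdef, perpProj, rankOne, ContinuousLinearMap.sub_apply,
      ContinuousLinearMap.add_apply, ContinuousLinearMap.smul_apply,
      ContinuousLinearMap.coe_comp', Function.comp_apply, ContinuousLinearMap.id_apply,
      ContinuousLinearMap.smulRight_apply, innerSL_apply_apply, map_sub, map_smul,
      ContinuousLinearMap.adjoint_inner_left, inner_sub_right, inner_smul_right,
      smul_sub, sub_smul, smul_smul]
    rw [real_inner_comm (H u) v]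
    abel_nf
    rw [mul_comm ⟪H u, v⟫ ⟪u, x⟫]
  have hQv : ∀ x : H1, ⟪Q x, v⟫ = 0 := by
    intro x
    simp only [hQdef, perpProj, rankOne, ContinuousLinearMap.coe_comp', Function.comp_apply,
      ContinuousLinearMap.sub_apply, ContinuousLinearMap.id_apply,
      ContinuousLinearMap.smulRight_apply, innerSL_apply_apply, inner_sub_left, inner_smul_left,
      hvv]
    simp only [starRingEnd_apply, star_trivial, mul_one]
    rw [real_inner_comm, sub_self]
  have hQu : Q u = 0 := by
    have : (perpProj u) u = 0 := by
      simp [perpProj, rankOne, huu, hu]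
    simp [hQdef, this]
  refine ⟨⟨ContinuousLinearMap.adjoint H v - ⟪H u, v⟫ • u, H u, ?_⟩, ?_, hQ⟩
  · ext x
    simp only [hP, rankOne, ContinuousLinearMap.sub_apply, ContinuousLinearMap.add_apply,
      ContinuousLinearMap.smul_apply, ContinuousLinearMap.smulRight_apply, innerSL_apply_apply,
      inner_sub_left, inner_smul_left, sub_smul, smul_smul, starRingEnd_apply, star_trivial]
    ring_nf
    abel
  · intro a c
    rw [hQ]
    unfold hsInner
    -- f x = ⟪c, Q x⟫
    set f : H1 →L[ℝ] ℝ := (innerSL ℝ c).comp Q with hf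
    have hsum : HasSum (fun i => b.repr u i • b i) u := b.hasSum_repr u
    have hsum2 : HasSum (fun i => f (b.repr u i • b i)) (f u) := f.hasSum hsum
    have hfu : f u = 0 := by simp [hf, hQu]
    have heq : ∀ i, ⟪Q (b i), (rankOne u c + rankOne a v) (b i)⟫
        = f (b.repr u i • b i) := by
      intro i
      simp only [rankOne, ContinuousLinearMap.add_apply, ContinuousLinearMap.smulRight_apply,
        innerSL_apply_apply, inner_add_right, real_inner_smul_right, hQv, mul_zero, add_zero,
        hf, ContinuousLinearMap.coe_comp', Function.comp_apply, map_smul, smul_eq_mul,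
        b.repr_apply_apply]
      rw [real_inner_comm c (Q (b i)), real_inner_comm u (b i)]
      try ring
    rw [tsum_congr heq, hsum2.tsum_eq, hfu]
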